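/- Σ_{n=1}^{∞} ζ(2n)·n²/4^n = 3π²/32. -/

import Mathlib

open Real

/-- Real Riemann zeta values via the series `∑ 1/k^m`. -/
noncomputable def zetaR (m : ℕ) : ℝ := ∑' k : ℕ, 1 / ((k : ℝ) + 1) ^ m

private noncomputable def gg (k : ℕ) : ℝ :=
  1/8 * (1/(2*(k:ℝ)+1) - 1/(2*(k:ℝ)+3)) + 3/8 * (1/(2*(k:ℝ)+1)^2 + 1/(2*(k:ℝ)+3)^2)
    + 1/4 * (1/(2*(k:ℝ)+1)^3 - 1/(2*(k:ℝ)+3)^3)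

private noncomputable def aa (k n : ℕ) : ℝ :=
  ((n:ℝ)+1)^2 * (1/(4*((k:ℝ)+1)^2))^(n+1)

private lemma tele (m : ℕ) (hm : m ≠ 0) :
    HasSum (fun k : ℕ => 1/(2*(k:ℝ)+1)^m - 1/(2*(k:ℝ)+3)^m) 1 := by
  set f : ℕ → ℝ := fun k => 1/(2*(k:ℝ)+1)^m with hf
  have key : ∀ k : ℕ, 1/(2*(k:ℝ)+1)^m - 1/(2*(k:ℝ)+3)^m = f k - f (k+1) := by
    intro k; simp only [hf]; push_cast; ring_nf
  have hnonneg : ∀ k : ℕ, 0 ≤ f k - f (k+1) := by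
    intro k
    have h1 : (0:ℝ) < 2*(k:ℝ)+1 := by positivity
    have h2 : (2*(k:ℝ)+1) ≤ 2*((k:ℝ)+1)+1 := by linarith
    have := one_div_le_one_div_of_le (pow_pos h1 m) (pow_le_pow_left₀ h1.le h2 m)
    simp only [hf]; push_cast; linarith
  have htend : Filter.Tendsto f Filter.atTop (nhds 0) := by
    have h1 : Filter.Tendsto (fun k : ℕ => (2*(k:ℝ)+1)^m) Filter.atTop Filter.atTop := by
      apply (Filter.tendsto_pow_atTop hm).comp
      apply Filter.tendsto_atTop_add_const_right
      exact (tendsto_natCast_atTop_atTop (R := ℝ)).const_mul_atTop (by norm_num)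
    simpa only [hf, one_div, Pi.inv_def] using h1.inv_tendsto_atTop
  have hsum : HasSum (fun k => f k - f (k+1)) (f 0 - 0) := by
    rw [hasSum_iff_tendsto_nat_of_nonneg hnonneg]
    have heq : ∀ n : ℕ, ∑ i ∈ Finset.range n, (f i - f (i+1)) = f 0 - f n := fun n =>
      Finset.sum_range_sub' f n
    simp only [heq]
    exact Filter.Tendsto.const_sub _ htend
  have hf0 : f 0 - 0 = 1 := by simp [hf]
  rw [hf0] at hsum
  exact hsum.congr_fun fun k => key k

private lemma hodd_sq : HasSum (fun k : ℕ => 1/(2*(k:ℝ)+1)^2) (π^2/8) := by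
  have htot : HasSum (fun n : ℕ => (1:ℝ) / (n:ℝ)^2) (π^2/6) := hasSum_zeta_two
  have heven : HasSum (fun k : ℕ => (1:ℝ) / ((2*k : ℕ) : ℝ)^2) (π^2/24) := by
    have := htot.mul_left (1/4)
    have h : ∀ k : ℕ, (1/4 : ℝ) * (1/(k:ℝ)^2) = 1 / ((2*k : ℕ) : ℝ)^2 := by
      intro k; push_cast; rw [mul_pow, one_div_mul_one_div]; norm_num
    rw [show (π^2/24 : ℝ) = 1/4 * (π^2/6) by ring]
    exact this.congr_fun fun k => (h k).symm
  have hsummodd : Summable (fun k : ℕ => (1:ℝ) / ((2*k+1 : ℕ) : ℝ)^2) := by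
    have hinj : Function.Injective (fun k : ℕ => 2*k+1) := fun a b h => by simpa using h
    exact htot.summable.comp_injective hinj
  have hodd := hsummodd.hasSum
  have hcomb := HasSum.even_add_odd (f := fun n : ℕ => (1:ℝ)/(n:ℝ)^2) heven hodd
  have huniq : π^2/24 + (∑' k : ℕ, (1:ℝ) / ((2*k+1 : ℕ) : ℝ)^2) = π^2/6 := hcomb.unique htot
  have hval : (∑' k : ℕ, (1:ℝ) / ((2*k+1 : ℕ) : ℝ)^2) = π^2/8 := by linarith
  rw [hval] at hodd
  exact hodd.congr_fun fun k => by push_cast; ring_nf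

private lemma hodd3_sq : HasSum (fun k : ℕ => 1/(2*(k:ℝ)+3)^2) (π^2/8 - 1) := by
  have h := (hasSum_nat_add_iff (f := fun k : ℕ => 1/(2*(k:ℝ)+1)^2) 1 (g := π^2/8 - 1)).2 ?_
  · exact h.congr_fun fun k => by push_cast; ring_nf
  · simpa using hodd_sq

private lemma hasSum_gg : HasSum gg (3*π^2/32) := by
  have h := (((tele 1 one_ne_zero).mul_left (1/8)).add
    ((hodd_sq.add hodd3_sq).mul_left (3/8))).add ((tele 3 three_ne_zero).mul_left (1/4))
  have hval : (1:ℝ)/8 * 1 + 3/8 * (π^2/8 + (π^2/8 - 1)) + 1/4 * 1 = 3*π^2/32 := by ring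
  rw [hval] at h
  exact h.congr_fun fun k => by rw [gg]; ring_nf

private lemma hasSum_row (k : ℕ) : HasSum (fun n : ℕ => aa k n) (gg k) := by
  set c : ℝ := (k:ℝ)+1 with hc
  have hc1 : (1:ℝ) ≤ c := by
    have := Nat.cast_nonneg (α := ℝ) k
    rw [hc]; linarith
  set r : ℝ := 1/(4*c^2) with hr
  have hr0 : 0 < r := by positivity
  have hrlt : r < 1 := by
    rw [hr, div_lt_one (by positivity)]
    nlinarith
  have hnorm : ‖r‖ < 1 := by rw [Real.norm_eq_abs, abs_of_pos hr0]; exact hrlt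
  have h2 : HasSum (fun n : ℕ => (((n+2).choose 2 : ℕ) : ℝ) * r^n) (1/(1-r)^3) :=
    hasSum_choose_mul_geometric_of_norm_lt_one 2 hnorm
  have h1 : HasSum (fun n : ℕ => (((n+1).choose 1 : ℕ) : ℝ) * r^n) (1/(1-r)^2) :=
    hasSum_choose_mul_geometric_of_norm_lt_one 1 hnorm
  have h3 : HasSum (fun n : ℕ => ((n:ℝ)+1)^2 * r^n) (2*(1/(1-r)^3) - 1/(1-r)^2) := by
    have := (h2.mul_left 2).sub h1
    apply this.congr_fun
    intro n
    have hch : ((n+2).choose 2 : ℕ) = (n+2)*(n+1)/2 := by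
      rw [Nat.choose_two_right]; congr 1
    have hch2 : (2 * ((n+2).choose 2) : ℕ) = (n+2)*(n+1) := by
      have hdvd : 2 ∣ (n+2)*(n+1) := by
        rw [mul_comm]; exact (Nat.even_mul_succ_self (n+1)).two_dvd
      rw [hch, Nat.mul_div_cancel' hdvd]
    have : (2:ℝ) * ((n+2).choose 2 : ℕ) = ((n:ℝ)+2)*((n:ℝ)+1) := by
      rw [show (2:ℝ) * ((n+2).choose 2 : ℕ) = ((2 * ((n+2).choose 2) : ℕ) : ℝ) by push_cast; ring,
        hch2]
      push_cast; ring
    rw [Nat.choose_one_right]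
    push_cast
    linear_combination (-(r^n)) * this
  have h4 := h3.mul_left r
  have key : r * (2*(1/(1-r)^3) - 1/(1-r)^2) = gg k := by
    have h1n : (2*(k:ℝ)+1) ≠ 0 := by positivity
    have h3n : (2*(k:ℝ)+3) ≠ 0 := by positivity
    set x : ℝ := (2*(k:ℝ)+1)*(2*(k:ℝ)+3) with hxdef
    have hxpos : (0:ℝ) < x := by rw [hxdef]; positivity
    have hxne : x ≠ 0 := ne_of_gt hxpos
    have hx1ne : x + 1 ≠ 0 := by positivity
    have hr2 : r = 1/(x+1) := by
      rw [hr, hc]; congr 1; rw [hxdef]; ring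
    have h1x : 1 - 1/(x+1) = x/(x+1) := by field_simp; ring
    rw [hr2, h1x, div_pow, div_pow]
    have step : 1/(x+1) * (2*(1/(x^3/(x+1)^3)) - 1/(x^2/(x+1)^2)) = (x+1)*(x+2)/x^3 := by
      rw [one_div_div, one_div_div]
      field_simp
      ring
    rw [step, gg, hxdef]
    field_simp
    ring
  rw [key] at h4
  apply h4.congr_fun
  intro n
  rw [aa, pow_succ]
  ring

theorem zeta_series_four_n_sq :
    ∑' n : ℕ, zetaR (2 * (n + 1)) * ((n : ℝ) + 1) ^ 2 / 4 ^ (n + 1) = 3 * π ^ 2 / 32 := by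
  have hnn : (0 : (ℕ × ℕ) → ℝ) ≤ fun p => aa p.1 p.2 := by
    intro p
    simp only [Pi.zero_apply, aa]
    positivity
  have hprod : Summable (fun p : ℕ × ℕ => aa p.1 p.2) := by
    rw [summable_prod_of_nonneg hnn]
    refine ⟨fun k => (hasSum_row k).summable, ?_⟩
    have heq : (fun k : ℕ => ∑' n, aa k n) = gg := funext fun k => (hasSum_row k).tsum_eq
    simpa [heq] using hasSum_gg.summable
  have step1 : ∀ n : ℕ, zetaR (2 * (n + 1)) * ((n : ℝ) + 1) ^ 2 / 4 ^ (n + 1)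
      = ∑' k : ℕ, aa k n := by
    intro n
    rw [zetaR, mul_div_assoc, ← tsum_mul_right]
    apply tsum_congr
    intro k
    have hpow : (1/(4*((k:ℝ)+1)^2))^(n+1) = 1/(4^(n+1) * ((k:ℝ)+1)^(2*(n+1))) := by
      rw [div_pow, one_pow, mul_pow, ← pow_mul]
    rw [aa, hpow, mul_one_div, div_mul_div_comm, one_mul,
      mul_comm ((((k:ℝ)+1))^(2*(n+1))) ((4:ℝ)^(n+1))]
  calc ∑' n : ℕ, zetaR (2 * (n + 1)) * ((n : ℝ) + 1) ^ 2 / 4 ^ (n + 1)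
      = ∑' n : ℕ, ∑' k : ℕ, aa k n := tsum_congr step1
    _ = ∑' k : ℕ, ∑' n : ℕ, aa k n := Summable.tsum_comm hprod
    _ = ∑' k : ℕ, gg k := tsum_congr fun k => (hasSum_row k).tsum_eq
    _ = 3 * π ^ 2 / 32 := hasSum_gg.tsum_eq
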